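/- Let m, N be positive naturals, let F : ℝ^m → ℝ^m be of the form F(y) = P(y)·u*(y) where P : ℝ^m → (real m×N matrices) is any map, S is a symmetric positive definite real N×N matrix, q : ℝ^m → ℝ, and u*(y) = -√(q(y)) · S·(P(y)ᵀy)/‖P(y)ᵀy‖. Let I ⊆ ℝ be an interval and x : ℝ → ℝ^m be differentiable on I with x'(t) = F(x(t)) for all t ∈ I. If for every t ∈ I one has P(x(t))ᵀx(t) ≠ 0 and q(x(t)) > 0, then the function t ↦ ‖x(t)‖² is strictly decreasing on I. -/

import Mathlib

open Matrix

/-- Along any solution on an interval `I` of the closed-loop drift-free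
system `ẋ = F(x) = P(x)u*(x)` with the closed-form HJB control
`u*(y) = -√(q y) • S (P(y)ᵀy / ‖P(y)ᵀy‖)` (Euclidean norm `‖w‖ = √(w ⬝ᵥ w)`,
`S` symmetric positive definite), if `P(x(t))ᵀx(t) ≠ 0` and `q(x(t)) > 0` on `I`,
then `t ↦ ‖x(t)‖² = x(t) ⬝ᵥ x(t)` is strictly decreasing on `I`. -/
theorem lyapunov_strict_decrease {m N : ℕ} (hm : 0 < m) (hN : 0 < N)
    (P : (Fin m → ℝ) → Matrix (Fin m) (Fin N) ℝ)
    (S : Matrix (Fin N) (Fin N) ℝ) (hS : S.PosDef)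
    (q : (Fin m → ℝ) → ℝ)
    (ustar : (Fin m → ℝ) → (Fin N → ℝ))
    (hustar : ∀ y, ustar y = -(Real.sqrt (q y) •
        S.mulVec ((Real.sqrt (((P y)ᵀ.mulVec y) ⬝ᵥ ((P y)ᵀ.mulVec y)))⁻¹
          • (P y)ᵀ.mulVec y)))
    (F : (Fin m → ℝ) → (Fin m → ℝ)) (hF : ∀ y, F y = (P y).mulVec (ustar y))
    (I : Set ℝ) (hI : I.OrdConnected)
    (x : ℝ → (Fin m → ℝ))
    (hx : ∀ t ∈ I, HasDerivWithinAt x (F (x t)) I t)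
    (hPx : ∀ t ∈ I, (P (x t))ᵀ.mulVec (x t) ≠ 0)
    (hq : ∀ t ∈ I, 0 < q (x t)) :
    StrictAntiOn (fun t => (x t) ⬝ᵥ (x t)) I := by
  -- the key inequality
  have hneg : ∀ t ∈ I, x t ⬝ᵥ F (x t) < 0 := by
    intro t ht
    set y := x t with hy
    set w : Fin N → ℝ := (P y)ᵀ.mulVec y with hw
    have hwne : w ≠ 0 := hPx t ht
    have hdot : x t ⬝ᵥ F (x t) =
        -(Real.sqrt (q y) * ((Real.sqrt (w ⬝ᵥ w))⁻¹ * (w ⬝ᵥ S.mulVec w))) := by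
      rw [hF, hustar, dotProduct_mulVec]
      rw [show vecMul y (P y) = w by rw [hw, ← Matrix.mulVec_transpose]]
      rw [dotProduct_neg, dotProduct_smul, Matrix.mulVec_smul, dotProduct_smul,
        smul_eq_mul, smul_eq_mul]
    have hww0 : 0 ≤ w ⬝ᵥ w :=
      Finset.sum_nonneg fun i _ => mul_self_nonneg (w i)
    have hww : 0 < w ⬝ᵥ w := by
      rcases lt_or_eq_of_le hww0 with h | h
      · exact h
      · exact absurd ((dotProduct_self_eq_zero).mp h.symm) hwne
    have hSw : 0 < w ⬝ᵥ S.mulVec w := by simpa using hS.dotProduct_mulVec_pos hwne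
    have h1 : 0 < Real.sqrt (q y) := Real.sqrt_pos.mpr (hq t ht)
    have h2 : 0 < (Real.sqrt (w ⬝ᵥ w))⁻¹ := inv_pos.mpr (Real.sqrt_pos.mpr hww)
    rw [hdot]
    have := mul_pos h1 (mul_pos h2 hSw)
    linarith
  -- derivative of the Lyapunov function
  have hg : ∀ t ∈ I, HasDerivWithinAt (fun s => x s ⬝ᵥ x s)
      (2 * (x t ⬝ᵥ F (x t))) I t := by
    intro t ht
    have hcomp : ∀ i, HasDerivWithinAt (fun s => x s i) (F (x t) i) I t := by
      intro i
      exact (hasDerivWithinAt_pi.mp (hx t ht)) i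
    have hsum : HasDerivWithinAt (fun s => ∑ i, x s i * x s i)
        (∑ i, (F (x t) i * x t i + x t i * F (x t) i)) I t :=
      HasDerivWithinAt.fun_sum fun i _ => (hcomp i).mul (hcomp i)
    have heq : (∑ i, (F (x t) i * x t i + x t i * F (x t) i))
        = 2 * (x t ⬝ᵥ F (x t)) := by
      simp only [dotProduct, Finset.mul_sum]
      exact Finset.sum_congr rfl fun i _ => by ring
    rw [← heq]
    exact hsum.congr (fun s _ => by simp [dotProduct]) (by simp [dotProduct])
  have hconv : Convex ℝ I := hI.convex
  apply strictAntiOn_of_deriv_neg hconv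
  · exact fun t ht => (hg t ht).continuousWithinAt
  · intro t ht
    have htI : t ∈ I := interior_subset ht
    have hmem : I ∈ nhds t := mem_interior_iff_mem_nhds.mp ht
    have hd : HasDerivAt (fun s => x s ⬝ᵥ x s) (2 * (x t ⬝ᵥ F (x t))) t :=
      (hg t htI).hasDerivAt hmem
    rw [hd.deriv]
    have := hneg t htI
    linarith
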